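/- Let t_1,...,t_n be distinct points of the circle R/2πZ lying in an open semicircle, and let m_1,...,m_n be positive integers with m_1 + ... + m_n = 2k. Then there exists a unique raked trigonometric polynomial f of degree at most 2k-1 with constant term 1 such that each t_i is a root of f of multiplicity m_i. -/

import Mathlib

open Real Finset

section RakedDev
open Polynomial Finset Complex Set
open scoped ContDiff Real

noncomputable section
namespace Raked


/-- theta operator X * d/dX -/
def Th (p : ℂ[X]) : ℂ[X] := X * Polynomial.derivative p

lemma Th_factor (w : ℂ) (m : ℕ) (Q : ℂ[X]) :
    Th ((X - C w)^(m+1) * Q)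
      = (X - C w)^m * (X * (C ((m:ℂ)+1) * Q + (X - C w) * Polynomial.derivative Q)) := by
  unfold Th
  rw [derivative_mul, derivative_pow, derivative_sub, derivative_X, derivative_C]
  push_cast
  ring

lemma eval_Th_iter (w : ℂ) : ∀ (m : ℕ) (Q : ℂ[X]),
    (Th^[m] ((X - C w)^m * Q)).eval w = m.factorial * w^m * Q.eval w := by
  intro m
  induction m with
  | zero => intro Q; simp
  | succ m IH =>
    intro Q
    rw [Function.iterate_succ_apply, Th_factor, IH]
    simp only [eval_mul, eval_add, eval_X, eval_C, eval_sub, sub_self, zero_mul, add_zero,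
      Nat.factorial_succ]
    push_cast
    ring

lemma dvd_of_eval_Th (B : ℂ[X]) (w : ℂ) (hw : w ≠ 0) (m : ℕ)
    (h : ∀ r < m, (Th^[r] B).eval w = 0) : (X - C w)^m ∣ B := by
  induction m with
  | zero => exact one_dvd _
  | succ m IH =>
    obtain ⟨Q, hQ⟩ := IH (fun r hr => h r (hr.trans (Nat.lt_succ_self m)))
    have h2 := eval_Th_iter w m Q
    rw [← hQ, h m (Nat.lt_succ_self m)] at h2
    have hQw : Q.eval w = 0 := by
      have hf : ((m.factorial : ℂ)) ≠ 0 := Nat.cast_ne_zero.mpr m.factorial_ne_zero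
      have hp : w^m ≠ 0 := pow_ne_zero _ hw
      field_simp at h2
      simpa [hf, hp] using h2.symm
    obtain ⟨R, hR⟩ := dvd_iff_isRoot.mpr hQw
    exact ⟨R, by rw [hQ, hR]; ring⟩

lemma Th_iter_factor (w : ℂ) : ∀ (r m : ℕ) (Q : ℂ[X]), r ≤ m →
    ∃ Q', Th^[r] ((X - C w)^m * Q) = (X - C w)^(m-r) * Q' := by
  intro r
  induction r with
  | zero => exact fun m Q _ => ⟨Q, by simp⟩
  | succ r IH =>
    intro m Q h
    obtain ⟨p, rfl⟩ : ∃ p, m = p + 1 := ⟨m - 1, by omega⟩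
    rw [Function.iterate_succ_apply, Th_factor]
    obtain ⟨Q', hQ'⟩ := IH p _ (by omega)
    exact ⟨Q', by rw [show p + 1 - (r+1) = p - r from by omega, hQ']⟩

lemma eval_Th_of_dvd (B : ℂ[X]) (w : ℂ) (m : ℕ) (h : (X - C w)^m ∣ B) :
    ∀ r < m, (Th^[r] B).eval w = 0 := by
  obtain ⟨Q, rfl⟩ := h
  intro r hr
  obtain ⟨Q', hQ'⟩ := Th_iter_factor w r m Q hr.le
  rw [hQ']
  simp only [eval_mul, eval_pow, eval_sub, eval_X, eval_C, sub_self]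
  rw [zero_pow (by omega)]
  ring

lemma dvd_comp_sq (w : ℂ) (hw : w ≠ 0) (m : ℕ) (R : ℂ[X])
    (h : (X - C w)^m ∣ R.comp (X^2)) : (X - C (w^2))^m ∣ R := by
  induction m with
  | zero => exact one_dvd _
  | succ m IH =>
    obtain ⟨U, hU⟩ := IH ((pow_dvd_pow _ (Nat.le_succ m)).trans h)
    have hw2 : (C (w^2) : ℂ[X]) = (C w)^2 := by rw [← C_pow]
    have hcomp : R.comp (X^2) = (X - C w)^m * ((X + C w)^m * U.comp (X^2)) := by
      rw [hU, mul_comp, pow_comp, sub_comp, X_comp, C_comp, hw2]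
      rw [show (X^2 - C w^2 : ℂ[X]) = (X - C w)*(X + C w) from by ring, mul_pow]
      ring
    obtain ⟨D, hD⟩ := h
    have hV : (X + C w)^m * U.comp (X^2) = (X - C w) * D := by
      apply mul_left_cancel₀ (pow_ne_zero m (X_sub_C_ne_zero w))
      rw [← hcomp, hD]; ring
    have hroot : ((X + C w)^m * U.comp (X^2)).eval w = 0 := by
      rw [hV]; simp
    have hUw : U.eval (w^2) = 0 := by
      simp only [eval_mul, eval_pow, eval_add, eval_X, eval_C, eval_comp] at hroot
      rcases mul_eq_zero.mp hroot with h' | h'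
      · exact absurd h' (pow_ne_zero _ (by rw [← two_mul]; exact mul_ne_zero two_ne_zero hw))
      · exact h'
    obtain ⟨W, hW⟩ := dvd_iff_isRoot.mpr hUw
    exact ⟨W, by rw [hU, hW]; ring⟩

lemma isCoprime_X_sub_C {a b : ℂ} (h : a ≠ b) : IsCoprime (X - C a : ℂ[X]) (X - C b) := by
  have hba : b - a ≠ 0 := sub_ne_zero_of_ne h.symm
  refine ⟨C (b-a)⁻¹, -C (b-a)⁻¹, ?_⟩
  have h2 : C (b-a)⁻¹ * (X - C a) + -C (b-a)⁻¹ * (X - C b) = C (b-a)⁻¹ * C (b - a) := by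
    rw [C_sub]; ring
  rw [h2, ← C_mul, inv_mul_cancel₀ hba, C_1]

lemma prod_pow_dvd {ι : Type} [Fintype ι] [DecidableEq ι] (z : ι → ℂ)
    (hz : Function.Injective z) (e : ι → ℕ) (T : ℂ[X])
    (h : ∀ l, (X - C (z l))^(e l) ∣ T) :
    (∏ l, (X - C (z l))^(e l)) ∣ T := by
  refine Finset.prod_dvd_of_coprime ?_ (fun l _ => h l)
  intro a _ b hb hab
  exact (isCoprime_X_sub_C (fun hc => hab (hz hc))).pow

lemma natDegree_prod_pow {ι : Type} [Fintype ι] (z : ι → ℂ) (e : ι → ℕ) :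
    (∏ l, (X - C (z l))^(e l)).natDegree = ∑ l, e l := by
  rw [Polynomial.natDegree_prod]
  · simp [natDegree_pow]
  · intro i _
    exact pow_ne_zero _ (X_sub_C_ne_zero _)

lemma crt {ι : Type} (s : Finset ι) (N A : ι → ℂ[X])
    (hco : ∀ i ∈ s, ∀ j ∈ s, i ≠ j → IsCoprime (N i) (N j)) :
    ∃ P : ℂ[X], ∀ i ∈ s, N i ∣ (P - A i) := by
  classical
  induction s using Finset.induction_on with
  | empty => exact ⟨0, by simp⟩
  | @insert a s ha IH =>
    obtain ⟨P₀, hP₀⟩ := IH (fun i hi j hj hij =>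
      hco i (mem_insert_of_mem hi) j (mem_insert_of_mem hj) hij)
    have hcop : IsCoprime (N a) (∏ i ∈ s, N i) :=
      IsCoprime.prod_right fun i hi =>
        hco a (mem_insert_self a s) i (mem_insert_of_mem hi) (fun he => ha (he ▸ hi))
    obtain ⟨u, v, huv⟩ := hcop
    refine ⟨P₀ * (u * N a) + A a * (v * ∏ i ∈ s, N i), ?_⟩
    intro i hi
    rcases mem_insert.mp hi with rfl | hi
    · exact ⟨(P₀ - A i) * u, by linear_combination (A i) * huv⟩
    · obtain ⟨q, hq⟩ := hP₀ i hi
      obtain ⟨r, hr⟩ := Finset.dvd_prod_of_mem N hi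
      exact ⟨q + v * r * (A a - P₀), by linear_combination hq + v * (A a - P₀) * hr + P₀ * huv⟩

lemma exists_sqrt_poly (w : ℂ) (hw : w ≠ 0) (m : ℕ) :
    ∃ σ : ℂ[X], (X - C w)^m ∣ (σ.comp (X^2) - X) := by
  induction m with
  | zero => exact ⟨0, one_dvd _⟩
  | succ m IH =>
    obtain ⟨σ, τ, hτ⟩ := IH
    set a : ℂ := -(τ.eval w) / (2*w)^m with ha
    refine ⟨σ + C a * (X - C (w^2))^m, ?_⟩
    have hw2 : (C (w^2) : ℂ[X]) = (C w)^2 := by rw [← C_pow]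
    have hcomp : (σ + C a * (X - C (w^2))^m).comp (X^2) - X
        = (X - C w)^m * (τ + C a * (X + C w)^m) := by
      rw [add_comp, mul_comp, C_comp, pow_comp, sub_comp, X_comp, C_comp, hw2,
        show (X^2 - C w^2 : ℂ[X]) = (X - C w)*(X + C w) from by ring, mul_pow]
      linear_combination hτ
    have hroot : (τ + C a * (X + C w)^m).eval w = 0 := by
      simp only [eval_add, eval_mul, eval_C, eval_pow, eval_X]
      have h2w : ((2*w)^m : ℂ) ≠ 0 := pow_ne_zero _ (mul_ne_zero two_ne_zero hw)
      rw [show w + w = 2*w from by ring, ha]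
      field_simp
      ring
    obtain ⟨D, hD⟩ := dvd_iff_isRoot.mpr hroot
    exact ⟨D, by rw [hcomp, hD]; ring⟩






lemma nat_le_infty (n : ℕ) : (n : WithTop ℕ∞) ≤ ∞ := by
  exact_mod_cast le_top

lemma clm_iteratedDeriv {F G : Type*} [NormedAddCommGroup F] [NormedSpace ℝ F]
    [NormedAddCommGroup G] [NormedSpace ℝ G] (L : F →L[ℝ] G) {f : ℝ → F}
    (hf : ContDiff ℝ ∞ f) (n : ℕ) (t : ℝ) :
    iteratedDeriv n (fun x => L (f x)) t = L (iteratedDeriv n f t) := by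
  rw [iteratedDeriv_eq_iteratedFDeriv, iteratedDeriv_eq_iteratedFDeriv,
    show (fun x => L (f x)) = L ∘ f from rfl,
    L.iteratedFDeriv_comp_left (hf.contDiffAt (x := t)) (nat_le_infty n)]
  rfl

lemma hasDerivAt_cexp_lin (c : ℂ) (t : ℝ) :
    HasDerivAt (fun s : ℝ => Complex.exp (c * s)) (c * Complex.exp (c * t)) t := by
  have h1 : HasDerivAt (fun s : ℝ => (s : ℂ)) 1 t := by
    simpa using (hasDerivAt_id t).ofReal_comp
  have h2 : HasDerivAt (fun s : ℝ => c * (s : ℂ)) c t := by simpa using h1.const_mul c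
  simpa [mul_comm] using h2.cexp

lemma contDiff_cexp_lin (c : ℂ) : ContDiff ℝ ∞ (fun s : ℝ => Complex.exp (c * s)) := by
  refine Complex.contDiff_exp.comp ?_
  exact contDiff_const.mul (by exact Complex.ofRealCLM.contDiff)

lemma contDiff_polyexp (Q : ℂ[X]) (c : ℂ) :
    ContDiff ℝ ∞ (fun s : ℝ => Q.eval (Complex.exp (c * s))) := by
  have h : (fun s : ℝ => Q.eval (Complex.exp (c * s)))
      = fun s : ℝ => ∑ i ∈ range (Q.natDegree + 1), Q.coeff i * (Complex.exp (c * s))^i :=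
    funext fun s => Polynomial.eval_eq_sum_range _
  rw [h]
  exact ContDiff.sum fun i _ => contDiff_const.mul ((contDiff_cexp_lin c).pow i)

lemma iteratedDeriv_cmul {f : ℝ → ℂ} (hf : ContDiff ℝ ∞ f) (c : ℂ) (r : ℕ) (t : ℝ) :
    iteratedDeriv r (fun s => c * f s) t = c * iteratedDeriv r f t := by
  have h := iteratedDerivWithin_const_smul (𝕜 := ℝ) (F := ℂ) (R := ℂ) (Set.mem_univ t)
    uniqueDiffOn_univ c ((hf.of_le (nat_le_infty r)).contDiffOn (s := Set.univ) t (Set.mem_univ t))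
  rw [show (c • f) = (fun s => c * f s) from rfl] at h
  simpa [iteratedDerivWithin_univ, smul_eq_mul] using h

lemma iteratedDeriv_add' {f g : ℝ → ℂ} (hf : ContDiff ℝ ∞ f) (hg : ContDiff ℝ ∞ g)
    (n : ℕ) (t : ℝ) :
    iteratedDeriv n (fun s => f s + g s) t = iteratedDeriv n f t + iteratedDeriv n g t := by
  have h := iteratedDerivWithin_add (Set.mem_univ t) uniqueDiffOn_univ
    ((hf.of_le (nat_le_infty n)).contDiffOn (s := Set.univ) t (Set.mem_univ t))
    ((hg.of_le (nat_le_infty n)).contDiffOn (s := Set.univ) t (Set.mem_univ t))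
  simpa [iteratedDerivWithin_univ, Pi.add_def] using h

lemma iteratedDeriv_polyexp (c : ℂ) (t : ℝ) : ∀ (r : ℕ) (Q : ℂ[X]),
    iteratedDeriv r (fun s : ℝ => Q.eval (Complex.exp (c * s))) t
      = c^r * (Th^[r] Q).eval (Complex.exp (c * t)) := by
  intro r
  induction r with
  | zero => intro Q; simp
  | succ r IH =>
    intro Q
    rw [iteratedDeriv_succ']
    have hd : deriv (fun s : ℝ => Q.eval (Complex.exp (c * s)))
        = fun s : ℝ => c * (Th Q).eval (Complex.exp (c * s)) := by
      funext s
      have h1 : HasDerivAt (fun s : ℝ => Q.eval (Complex.exp (c * s)))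
          (Q.derivative.eval (Complex.exp (c * s)) * (c * Complex.exp (c * s))) s :=
        (Q.hasDerivAt (Complex.exp (c * s))).comp (h₂ := fun x => Q.eval x) s (hasDerivAt_cexp_lin c s)
      rw [h1.deriv]
      unfold Th
      simp only [eval_mul, eval_X]
      ring
    rw [hd, iteratedDeriv_cmul (contDiff_polyexp (Th Q) c) c, IH (Th Q),
      Function.iterate_succ_apply]
    ring

lemma vanish_transfer (c : ℂ) (t : ℝ) : ∀ (m : ℕ) (g : ℝ → ℂ), ContDiff ℝ ∞ g →
    (∀ r < m, iteratedDeriv r g t = 0) →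
    ∀ r < m, iteratedDeriv r (fun s : ℝ => Complex.exp (c * s) * g s) t = 0 := by
  intro m
  induction m with
  | zero => intro g _ _ r hr; omega
  | succ m IH =>
    intro g hg h r hr
    match r with
    | 0 =>
      have h0 := h 0 (by omega)
      rw [iteratedDeriv_zero] at h0
      simp only [iteratedDeriv_zero, h0, mul_zero]
    | Nat.succ r =>
      rw [iteratedDeriv_succ']
      have hgd : Differentiable ℝ g := hg.differentiable (by simp)
      have hder : deriv (fun s : ℝ => Complex.exp (c * s) * g s)
          = fun s : ℝ => Complex.exp (c * s) * (c * g s + deriv g s) := by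
        funext s
        rw [HasDerivAt.deriv (f := fun s : ℝ => Complex.exp (c * s) * g s) ((hasDerivAt_cexp_lin c s).mul (hgd s).hasDerivAt)]
        ring
      rw [hder]
      have hg' : ContDiff ℝ ∞ (fun s : ℝ => c * g s + deriv g s) :=
        (contDiff_const.mul hg).add (contDiff_infty_iff_deriv.mp hg).2
      refine IH (fun s : ℝ => c * g s + deriv g s) hg' ?_ r (by omega)
      intro r' hr'
      rw [iteratedDeriv_add' (contDiff_const.mul hg) (contDiff_infty_iff_deriv.mp hg).2,
        iteratedDeriv_cmul hg, ← iteratedDeriv_succ', h r' (by omega), h (r'+1) (by omega)]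
      ring




def gam (a b : ℕ → ℝ) (j : ℕ) : ℂ := ⟨a j / 2, -(b j) / 2⟩

def Pg (k : ℕ) (γ : ℕ → ℂ) : ℂ[X] :=
  ∑ j ∈ range k, (C (γ j) * X^(k+j) + C ((starRingEnd ℂ) (γ j)) * X^(k-1-j))

def Bg (k : ℕ) (γ : ℕ → ℂ) : ℂ[X] := X^(2*k-1) + (Pg k γ).comp (X^2)

lemma natDegree_Pg_le (k : ℕ) (hk : 1 ≤ k) (γ : ℕ → ℂ) : (Pg k γ).natDegree ≤ 2*k-1 := by
  refine natDegree_sum_le_of_forall_le _ _ fun j hj => ?_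
  have hj' : j < k := mem_range.mp hj
  refine (natDegree_add_le _ _).trans (max_le ?_ ?_)
  · exact (natDegree_C_mul_le _ _).trans (by rw [natDegree_X_pow]; omega)
  · exact (natDegree_C_mul_le _ _).trans (by rw [natDegree_X_pow]; omega)

lemma Pg_coeff_hi (k : ℕ) (γ : ℕ → ℂ) (j : ℕ) (hj : j < k) :
    (Pg k γ).coeff (k + j) = γ j := by
  rw [Pg, finset_sum_coeff]
  rw [Finset.sum_eq_single j]
  · simp only [coeff_add, coeff_C_mul, coeff_X_pow]
    have h2 : ¬(k + j = k - 1 - j) := by omega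
    simp [h2]
  · intro j' hj' hne
    have hj'' : j' < k := mem_range.mp hj'
    simp only [coeff_add, coeff_C_mul, coeff_X_pow]
    have h1 : ¬(k + j = k + j') := by omega
    have h2 : ¬(k + j = k - 1 - j') := by omega
    simp [h1, h2]
    intro h; exact absurd h.symm hne
  · intro h; exact absurd (mem_range.mpr hj) h

lemma pair_id (γ : ℂ) (x : ℝ) :
    γ * Complex.exp ((x:ℂ) * Complex.I) + (starRingEnd ℂ) γ * Complex.exp (-((x:ℂ) * Complex.I))
      = ((2*γ.re * Real.cos x - 2*γ.im * Real.sin x : ℝ) : ℂ) := by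
  have h1 : (starRingEnd ℂ) (γ * Complex.exp ((x:ℂ) * Complex.I))
      = (starRingEnd ℂ) γ * Complex.exp (-((x:ℂ) * Complex.I)) := by
    rw [map_mul, ← Complex.exp_conj]
    congr 2
    simp [Complex.conj_ofReal]
  rw [← h1, Complex.add_conj]
  rw [Complex.mul_re, Complex.exp_ofReal_mul_I_re, Complex.exp_ofReal_mul_I_im]
  push_cast
  ring

lemma pair_id_re (p q : ℂ) (x : ℝ) :
    (p * Complex.exp ((x:ℂ) * Complex.I)).re + (q * Complex.exp (-((x:ℂ) * Complex.I))).re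
      = (p + (starRingEnd ℂ) q).re * Real.cos x - (p + (starRingEnd ℂ) q).im * Real.sin x := by
  have h1 : (q * Complex.exp (-((x:ℂ) * Complex.I))).re
      = ((starRingEnd ℂ) q * Complex.exp ((x:ℂ) * Complex.I)).re := by
    rw [← Complex.conj_re ((starRingEnd ℂ) q * Complex.exp ((x:ℂ) * Complex.I))]
    rw [map_mul, ← Complex.exp_conj]
    simp [Complex.conj_ofReal]
  rw [h1, ← Complex.add_re, ← add_mul, Complex.mul_re,
    Complex.exp_ofReal_mul_I_re, Complex.exp_ofReal_mul_I_im]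

lemma exp_sq (s : ℝ) : (Complex.exp (Complex.I * s))^2 = Complex.exp ((2*Complex.I) * s) := by
  rw [← Complex.exp_nat_mul]; congr 1; push_cast; ring

/-- per-term identity in sumrep -/
lemma sum_term (k j : ℕ) (hk : 1 ≤ k) (hj : j < k) (γ : ℂ) (s : ℝ) :
    Complex.exp ((-(2*(k:ℝ)-1) * Complex.I) * s)
        * (γ * (Complex.exp ((2*Complex.I) * s))^(k+j)
            + (starRingEnd ℂ) γ * (Complex.exp ((2*Complex.I) * s))^(k-1-j))
      = ((2*γ.re * Real.cos ((2*(j:ℝ)+1)*s) - 2*γ.im * Real.sin ((2*(j:ℝ)+1)*s) : ℝ) : ℂ) := by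
  rw [← pair_id γ ((2*(j:ℝ)+1)*s), ← Complex.exp_nat_mul, ← Complex.exp_nat_mul]
  have e1 : ((k+j : ℕ) : ℂ) * ((2*Complex.I) * s) + (-(2*(k:ℝ)-1) * Complex.I) * s
      = (((2*(j:ℝ)+1)*s : ℝ) : ℂ) * Complex.I := by push_cast; ring
  have e2 : ((k-1-j : ℕ) : ℂ) * ((2*Complex.I) * s) + (-(2*(k:ℝ)-1) * Complex.I) * s
      = -((((2*(j:ℝ)+1)*s : ℝ) : ℂ) * Complex.I) := by
    have hc : ((k-1-j : ℕ) : ℂ) = (k:ℂ) - 1 - j := by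
      have h' : k - 1 - j = k - (1 + j) := by omega
      rw [h', Nat.cast_sub (by omega)]
      push_cast; ring
    rw [hc]; push_cast; ring
  rw [mul_add]
  rw [mul_comm (Complex.exp _) (γ * _), mul_assoc, ← Complex.exp_add, e1]
  rw [mul_comm (Complex.exp _) ((starRingEnd ℂ) γ * _), mul_assoc, ← Complex.exp_add, e2]

lemma sumrep (k : ℕ) (hk : 1 ≤ k) (a b : ℕ → ℝ) (s : ℝ) :
    ((∑ j ∈ range k, (a j * Real.cos ((2*(j:ℝ)+1)*s) + b j * Real.sin ((2*(j:ℝ)+1)*s)) : ℝ) : ℂ)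
      = Complex.exp ((-(2*(k:ℝ)-1) * Complex.I) * s)
          * (Pg k (gam a b)).eval (Complex.exp ((2*Complex.I) * s)) := by
  rw [Pg, eval_finset_sum, Finset.mul_sum, Complex.ofReal_sum]
  refine Finset.sum_congr rfl fun j hj => ?_
  have hj' : j < k := mem_range.mp hj
  simp only [eval_add, eval_mul, eval_C, eval_pow, eval_X]
  rw [sum_term k j hk hj' (gam a b j) s]
  have hre : (gam a b j).re = a j / 2 := rfl
  have him : (gam a b j).im = -(b j) / 2 := rfl
  rw [hre, him]
  push_cast
  ring

lemma rep (k : ℕ) (hk : 1 ≤ k) (a b : ℕ → ℝ) (s : ℝ) :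
    ((1 + ∑ j ∈ range k, (a j * Real.cos ((2*(j:ℝ)+1)*s) + b j * Real.sin ((2*(j:ℝ)+1)*s)) : ℝ) : ℂ)
      = Complex.exp ((-(2*(k:ℝ)-1) * Complex.I) * s)
          * (Bg k (gam a b)).eval (Complex.exp (Complex.I * s)) := by
  rw [Bg, eval_add, eval_pow, eval_X, eval_comp, eval_pow, eval_X, mul_add]
  have h1 : Complex.exp ((-(2*(k:ℝ)-1) * Complex.I) * s) * (Complex.exp (Complex.I * s))^(2*k-1)
      = 1 := by
    rw [← Complex.exp_nat_mul, ← Complex.exp_add,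
      show (-(2*(k:ℝ)-1) * Complex.I) * (s:ℂ) + ((2*k-1 : ℕ) : ℂ) * (Complex.I * s) = 0 from by
        rw [Nat.cast_sub (by omega : 1 ≤ 2*k)]; push_cast; ring,
      Complex.exp_zero]
  rw [exp_sq, h1, Complex.ofReal_add, Complex.ofReal_one, sumrep k hk a b s]




lemma exp_cancel (k : ℕ) (hk : 1 ≤ k) (s : ℝ) :
    Complex.exp ((-(2*(k:ℝ)-1) * Complex.I) * s) * (Complex.exp (Complex.I * s))^(2*k-1) = 1 := by
  rw [← Complex.exp_nat_mul, ← Complex.exp_add,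
    show (-(2*(k:ℝ)-1) * Complex.I) * (s:ℂ) + ((2*k-1 : ℕ) : ℂ) * (Complex.I * s) = 0 from by
      rw [Nat.cast_sub (by omega : 1 ≤ 2*k)]; push_cast; ring,
    Complex.exp_zero]

lemma expand0 (k : ℕ) (Q : ℂ[X]) (hQ : Q.natDegree < 2*k) (s : ℝ) :
    Complex.exp ((-(2*(k:ℝ)-1) * Complex.I) * s) * Q.eval (Complex.exp ((2*Complex.I) * s))
      = ∑ l ∈ range (2*k),
          Q.coeff l * Complex.exp ((((2*(l:ℝ) - (2*(k:ℝ)-1))*s : ℝ) : ℂ) * Complex.I) := by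
  rw [Polynomial.eval_eq_sum_range' hQ, Finset.mul_sum]
  refine Finset.sum_congr rfl fun l hl => ?_
  rw [← Complex.exp_nat_mul, mul_comm (Complex.exp _) (Q.coeff l * _), mul_assoc,
    ← Complex.exp_add,
    show ((l:ℂ)) * ((2*Complex.I) * s) + (-(2*(k:ℝ)-1) * Complex.I) * s
        = (((2*(l:ℝ) - (2*(k:ℝ)-1))*s : ℝ) : ℂ) * Complex.I from by push_cast; ring]

lemma rep_re (k : ℕ) (hk : 1 ≤ k) (P : ℂ[X]) (hP : P.natDegree < 2*k) (s : ℝ) :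
    (Complex.exp ((-(2*(k:ℝ)-1) * Complex.I) * s)
        * ((X^(2*k-1) + P.comp (X^2)).eval (Complex.exp (Complex.I * s)))).re
      = 1 + ∑ j ∈ range k,
          ((P.coeff (k+j) + (starRingEnd ℂ) (P.coeff (k-1-j))).re * Real.cos ((2*(j:ℝ)+1)*s)
            + (-((P.coeff (k+j) + (starRingEnd ℂ) (P.coeff (k-1-j))).im))
                * Real.sin ((2*(j:ℝ)+1)*s)) := by
  rw [eval_add, eval_pow, eval_X, eval_comp, eval_pow, eval_X, mul_add, exp_cancel k hk s,
    exp_sq, expand0 k P hP s, Complex.add_re, Complex.one_re]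
  congr 1
  rw [Complex.re_sum, two_mul k, Finset.sum_range_add,
    ← Finset.sum_range_reflect
      (fun l => (P.coeff l
        * Complex.exp ((((2*(l:ℝ) - (2*(k:ℝ)-1))*s : ℝ) : ℂ) * Complex.I)).re) k,
    ← Finset.sum_add_distrib]
  refine Finset.sum_congr rfl fun j hj => ?_
  have hj' : j < k := mem_range.mp hj
  have hx2 : 2*((k+j : ℕ):ℝ) - (2*(k:ℝ)-1) = 2*(j:ℝ)+1 := by push_cast; ring
  have hx1 : 2*((k-1-j : ℕ):ℝ) - (2*(k:ℝ)-1) = -(2*(j:ℝ)+1) := by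
    have h' : k-1-j = k - (1+j) := by omega
    rw [h', Nat.cast_sub (by omega)]; push_cast; ring
  rw [hx2, hx1, show ((-(2*(j:ℝ)+1))*s : ℝ) = -((2*(j:ℝ)+1)*s) from by ring,
    Complex.ofReal_neg, neg_mul, add_comm, pair_id_re]
  ring

lemma rootcond_iff (g : ℝ → ℝ) (Q : ℂ[X]) (e c : ℂ) (hc : c ≠ 0) (t : ℝ) (m : ℕ)
    (hrep : ∀ s : ℝ, (g s : ℂ) = Complex.exp (e * s) * Q.eval (Complex.exp (c * s))) :
    (∀ r < m, iteratedDeriv r g t = 0) ↔ (X - C (Complex.exp (c * t)))^m ∣ Q := by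
  have hHsm : ContDiff ℝ ∞ (fun s : ℝ => Q.eval (Complex.exp (c * s))) := contDiff_polyexp Q c
  have hGsm : ContDiff ℝ ∞
      (fun s : ℝ => Complex.exp (e * s) * Q.eval (Complex.exp (c * s))) :=
    (contDiff_cexp_lin e).mul hHsm
  have hgsm : ContDiff ℝ ∞ g := by
    have hgre : g = fun s : ℝ =>
        Complex.reCLM (Complex.exp (e * s) * Q.eval (Complex.exp (c * s))) := by
      funext s
      rw [Complex.reCLM_apply, ← hrep s, Complex.ofReal_re]
    rw [hgre]
    exact Complex.reCLM.contDiff.comp hGsm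
  have key : ∀ r : ℕ,
      iteratedDeriv r (fun s : ℝ => Complex.exp (e * s) * Q.eval (Complex.exp (c * s))) t
        = ((iteratedDeriv r g t : ℝ) : ℂ) := by
    intro r
    have hG : (fun s : ℝ => Complex.exp (e * s) * Q.eval (Complex.exp (c * s)))
        = fun s : ℝ => Complex.ofRealCLM (g s) := by
      funext s
      rw [Complex.ofRealCLM_apply, hrep s]
    rw [hG, clm_iteratedDeriv Complex.ofRealCLM hgsm r t, Complex.ofRealCLM_apply]
  constructor
  · intro h
    apply dvd_of_eval_Th Q _ (Complex.exp_ne_zero _) m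
    intro r hr
    have hGv : ∀ r' < m, iteratedDeriv r'
        (fun s : ℝ => Complex.exp (e * s) * Q.eval (Complex.exp (c * s))) t = 0 :=
      fun r' hr' => by rw [key r', h r' hr', Complex.ofReal_zero]
    have hHv := vanish_transfer (-e) t m _ hGsm hGv r hr
    have hHeq : (fun s : ℝ => Complex.exp (-e * s)
          * (Complex.exp (e * s) * Q.eval (Complex.exp (c * s))))
        = fun s : ℝ => Q.eval (Complex.exp (c * s)) := by
      funext s
      rw [← mul_assoc, ← Complex.exp_add,
        show -e * (s:ℂ) + e * s = 0 from by ring, Complex.exp_zero, one_mul]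
    rw [hHeq] at hHv
    have h2 := iteratedDeriv_polyexp c t r Q
    rw [hHv] at h2
    exact ((mul_eq_zero.mp h2.symm).resolve_left (pow_ne_zero _ hc))
  · intro hdvd r hr
    have hHv : ∀ r' < m, iteratedDeriv r' (fun s : ℝ => Q.eval (Complex.exp (c * s))) t = 0 := by
      intro r' hr'
      rw [iteratedDeriv_polyexp, eval_Th_of_dvd Q _ m hdvd r' hr', mul_zero]
    have hGv := vanish_transfer e t m _ hHsm hHv r hr
    have h3 := key r
    rw [hGv] at h3
    exact_mod_cast h3.symm

lemma hasDerivAt_trig (k : ℕ) (a b : ℕ → ℝ) (s : ℝ) :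
    HasDerivAt (fun s : ℝ => 1 + ∑ j ∈ range k,
        (a j * Real.cos ((2*(j:ℝ)+1)*s) + b j * Real.sin ((2*(j:ℝ)+1)*s)))
      (∑ j ∈ range k, ((2*(j:ℝ)+1) * b j * Real.cos ((2*(j:ℝ)+1)*s)
          + (-((2*(j:ℝ)+1) * a j)) * Real.sin ((2*(j:ℝ)+1)*s))) s := by
  refine HasDerivAt.const_add 1 (HasDerivAt.fun_sum fun j _ => ?_)
  have hlin : HasDerivAt (fun s : ℝ => (2*(j:ℝ)+1)*s) (2*(j:ℝ)+1) s := by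
    simpa using (hasDerivAt_id s).const_mul (2*(j:ℝ)+1)
  have hc := (Real.hasDerivAt_cos ((2*(j:ℝ)+1)*s)).comp s hlin
  have hs := (Real.hasDerivAt_sin ((2*(j:ℝ)+1)*s)).comp s hlin
  have h := (hc.const_mul (a j)).add (hs.const_mul (b j))
  convert h using 1
  · rfl
  ring

lemma contDiff_trig (k : ℕ) (a b : ℕ → ℝ) :
    ContDiff ℝ ∞ (fun s : ℝ => 1 + ∑ j ∈ range k,
        (a j * Real.cos ((2*(j:ℝ)+1)*s) + b j * Real.sin ((2*(j:ℝ)+1)*s))) := by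
  refine contDiff_const.add (ContDiff.sum fun j _ => ContDiff.add ?_ ?_)
  · exact contDiff_const.mul
      (Real.contDiff_cos.comp (contDiff_const.mul contDiff_id))
  · exact contDiff_const.mul
      (Real.contDiff_sin.comp (contDiff_const.mul contDiff_id))


lemma exp_two_inj {α x y : ℝ} (hx : x ∈ Set.Ioo α (α+π)) (hy : y ∈ Set.Ioo α (α+π))
    (h : Complex.exp ((2*Complex.I) * x) = Complex.exp ((2*Complex.I) * y)) : x = y := by
  rw [Complex.exp_eq_exp_iff_exists_int] at h
  obtain ⟨n, hn⟩ := h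
  have him := congrArg Complex.im hn
  simp only [Complex.mul_im, Complex.mul_re, Complex.add_im, Complex.ofReal_re,
    Complex.ofReal_im, Complex.I_re, Complex.I_im, Complex.re_ofNat, Complex.im_ofNat,
    Complex.intCast_re, Complex.intCast_im] at him
  have hxy : x - y = n * π := by push_cast at him ⊢; nlinarith [him]
  have habs : |x - y| < π := by
    rw [abs_sub_lt_iff]
    constructor <;> [nlinarith [hx.1, hx.2, hy.1, hy.2]; nlinarith [hx.1, hx.2, hy.1, hy.2]]
  have hn0 : n = 0 := by
    have h1 : |(n:ℝ)| * π < π := by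
      have := abs_mul (n:ℝ) π
      rw [abs_of_pos Real.pi_pos] at this
      rw [← this, ← hxy]
      exact habs
    have h2 : |(n:ℝ)| < 1 := by nlinarith [Real.pi_pos]
    have h3 : |n| < 1 := by exact_mod_cast (by push_cast; exact h2 : ((|n| : ℤ) : ℝ) < 1)
    rw [abs_lt] at h3
    omega
  rw [hn0] at hxy
  push_cast at hxy
  linarith

lemma rolle_count {g : ℝ → ℝ} (hg : Differentiable ℝ g) : ∀ (n : ℕ) (t : Fin (n+1) → ℝ),
    Function.Injective t → (∀ i, g (t i) = 0) →
    ∃ ξ : Fin n → ℝ, Function.Injective ξ ∧ (∀ j, deriv g (ξ j) = 0)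
      ∧ (∀ j i, ξ j ≠ t i)
      ∧ (∀ j, ∃ i₁, t i₁ < ξ j) ∧ (∀ j, ∃ i₂, ξ j < t i₂) := by
  intro n
  induction n with
  | zero =>
    intro t _ _
    exact ⟨Fin.elim0, fun p => p.elim0, fun j => j.elim0, fun j => j.elim0,
      fun j => j.elim0, fun j => j.elim0⟩
  | succ n IH =>
    intro t hinj hz
    obtain ⟨imax, himax⟩ := Finite.exists_max t
    set t' : Fin (n+1) → ℝ := t ∘ imax.succAbove with ht'
    have ht'inj : Function.Injective t' := hinj.comp (Fin.succAbove_right_injective)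
    obtain ⟨ξ', hξinj, hξd, hξne, hξlo, hξhi⟩ := IH t' ht'inj (fun i => hz _)
    obtain ⟨i2, hi2⟩ := Finite.exists_max t'
    have hmax_lt : t' i2 < t imax := by
      refine lt_of_le_of_ne (himax _) ?_
      intro hcontra
      exact Fin.succAbove_ne imax i2 (hinj hcontra)
    obtain ⟨c, hc_mem, hc⟩ := exists_deriv_eq_zero hmax_lt hg.continuous.continuousOn
      ((hz _).trans (hz imax).symm)
    have hltc : ∀ j, ξ' j < c := by
      intro j
      obtain ⟨i₂, hl⟩ := hξhi j
      exact lt_trans (lt_of_lt_of_le hl (hi2 _)) hc_mem.1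
    refine ⟨Fin.snoc ξ' c, ?_, ?_, ?_, ?_, ?_⟩
    · intro p q hpq
      induction p using Fin.lastCases with
      | last =>
        induction q using Fin.lastCases with
        | last => rfl
        | cast q' =>
          rw [Fin.snoc_last, Fin.snoc_castSucc] at hpq
          exact absurd hpq.symm (hltc q').ne
      | cast p' =>
        induction q using Fin.lastCases with
        | last =>
          rw [Fin.snoc_last, Fin.snoc_castSucc] at hpq
          exact absurd hpq (hltc p').ne
        | cast q' =>
          rw [Fin.snoc_castSucc, Fin.snoc_castSucc] at hpq
          rw [hξinj hpq]
    · intro j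
      induction j using Fin.lastCases with
      | last => rw [Fin.snoc_last]; exact hc
      | cast j' => rw [Fin.snoc_castSucc]; exact hξd j'
    · intro j i
      induction j using Fin.lastCases with
      | last =>
        rw [Fin.snoc_last]
        rcases eq_or_ne i imax with rfl | hne
        · exact hc_mem.2.ne
        · obtain ⟨i', rfl⟩ := Fin.exists_succAbove_eq hne
          have : t (imax.succAbove i') ≤ t' i2 := hi2 i'
          exact (lt_of_le_of_lt this hc_mem.1).ne'
      | cast j' =>
        rw [Fin.snoc_castSucc]
        rcases eq_or_ne i imax with rfl | hne
        · exact ((hltc j').trans hc_mem.2).ne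
        · obtain ⟨i', rfl⟩ := Fin.exists_succAbove_eq hne
          exact hξne j' i'
    · intro j
      induction j using Fin.lastCases with
      | last => exact ⟨imax.succAbove i2, by rw [Fin.snoc_last]; exact hc_mem.1⟩
      | cast j' =>
        obtain ⟨i₁, hl⟩ := hξlo j'
        exact ⟨imax.succAbove i₁, by rw [Fin.snoc_castSucc]; exact hl⟩
    · intro j
      induction j using Fin.lastCases with
      | last => exact ⟨imax, by rw [Fin.snoc_last]; exact hc_mem.2⟩
      | cast j' => exact ⟨imax, by rw [Fin.snoc_castSucc]; exact (hltc j').trans hc_mem.2⟩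



lemma I2_ne_zero : (2*Complex.I : ℂ) ≠ 0 := mul_ne_zero two_ne_zero Complex.I_ne_zero

lemma uniq (k n : ℕ) (hk : 1 ≤ k) (α : ℝ) (t : Fin n → ℝ)
    (ht : ∀ i, t i ∈ Set.Ioo α (α + π)) (htinj : Function.Injective t)
    (m : Fin n → ℕ) (hsum : ∑ i, m i = 2*k)
    (a₁ b₁ a₂ b₂ : ℕ → ℝ) (f₁ f₂ : ℝ → ℝ)
    (h₁ : ∀ s : ℝ, f₁ s = 1 + ∑ j ∈ range k,
      (a₁ j * Real.cos ((2*(j:ℝ)+1)*s) + b₁ j * Real.sin ((2*(j:ℝ)+1)*s)))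
    (h₂ : ∀ s : ℝ, f₂ s = 1 + ∑ j ∈ range k,
      (a₂ j * Real.cos ((2*(j:ℝ)+1)*s) + b₂ j * Real.sin ((2*(j:ℝ)+1)*s)))
    (hc₁ : ∀ i, ∀ r < m i, iteratedDeriv r f₁ (t i) = 0)
    (hc₂ : ∀ i, ∀ r < m i, iteratedDeriv r f₂ (t i) = 0) : f₁ = f₂ := by
  classical
  have hrep₁ : ∀ s : ℝ, ((f₁ s : ℝ) : ℂ)
      = Complex.exp ((-(2*(k:ℝ)-1) * Complex.I) * s)
          * (Bg k (gam a₁ b₁)).eval (Complex.exp (Complex.I * s)) := by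
    intro s; rw [h₁ s]; exact_mod_cast rep k hk a₁ b₁ s
  have hrep₂ : ∀ s : ℝ, ((f₂ s : ℝ) : ℂ)
      = Complex.exp ((-(2*(k:ℝ)-1) * Complex.I) * s)
          * (Bg k (gam a₂ b₂)).eval (Complex.exp (Complex.I * s)) := by
    intro s; rw [h₂ s]; exact_mod_cast rep k hk a₂ b₂ s
  have dvd₁ : ∀ i, (X - C (Complex.exp (Complex.I * t i)))^(m i) ∣ Bg k (gam a₁ b₁) :=
    fun i => (rootcond_iff f₁ _ _ _ Complex.I_ne_zero (t i) (m i) hrep₁).mp (hc₁ i)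
  have dvd₂ : ∀ i, (X - C (Complex.exp (Complex.I * t i)))^(m i) ∣ Bg k (gam a₂ b₂) :=
    fun i => (rootcond_iff f₂ _ _ _ Complex.I_ne_zero (t i) (m i) hrep₂).mp (hc₂ i)
  set Δ : ℂ[X] := Pg k (gam a₁ b₁) - Pg k (gam a₂ b₂) with hΔ
  have hBsub : Bg k (gam a₁ b₁) - Bg k (gam a₂ b₂) = Δ.comp (X^2) := by
    rw [Bg, Bg, hΔ, sub_comp]; ring
  have hdvdΔ : ∀ i, (X - C (Complex.exp ((2*Complex.I) * t i)))^(m i) ∣ Δ := by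
    intro i
    have h3 : (X - C (Complex.exp (Complex.I * t i)))^(m i) ∣ Δ.comp (X^2) := by
      rw [← hBsub]; exact dvd_sub (dvd₁ i) (dvd₂ i)
    have h4 := dvd_comp_sq _ (Complex.exp_ne_zero _) (m i) Δ h3
    rwa [exp_sq (t i)] at h4
  have hzinj : Function.Injective (fun i => Complex.exp ((2*Complex.I) * t i)) := by
    intro i i' hii
    exact htinj (exp_two_inj (ht i) (ht i') hii)
  have hprod := prod_pow_dvd _ hzinj m Δ hdvdΔ
  have hΔ0 : Δ = 0 := by
    by_contra hne
    have hd1 := Polynomial.natDegree_le_of_dvd hprod hne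
    rw [natDegree_prod_pow, hsum] at hd1
    have hd2 : Δ.natDegree ≤ 2*k-1 := by
      refine (natDegree_sub_le _ _).trans (max_le ?_ ?_) <;> exact natDegree_Pg_le k hk _
    omega
  have hPg : Pg k (gam a₁ b₁) = Pg k (gam a₂ b₂) := by
    have := sub_eq_zero.mp hΔ0
    exact this
  funext s
  have hcc : ((f₁ s : ℝ) : ℂ) = ((f₂ s : ℝ) : ℂ) := by
    rw [hrep₁ s, hrep₂ s, Bg, Bg, hPg]
  exact_mod_cast hcc

lemma no_extra (k n : ℕ) (hk : 1 ≤ k) (α : ℝ) (t : Fin n → ℝ)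
    (ht : ∀ i, t i ∈ Set.Ioo α (α + π)) (htinj : Function.Injective t)
    (μ : Fin n → ℕ) (hμ1 : ∀ i, 1 ≤ μ i) (hμsum : ∑ i, μ i = 2*k+1)
    (a b : ℕ → ℝ)
    (hcond : ∀ i, ∀ r < μ i, iteratedDeriv r (fun s : ℝ => 1 + ∑ j ∈ range k,
        (a j * Real.cos ((2*(j:ℝ)+1)*s) + b j * Real.sin ((2*(j:ℝ)+1)*s))) (t i) = 0) :
    False := by
  classical
  rcases n with _ | n'
  · simp at hμsum
  set f : ℝ → ℝ := fun s : ℝ => 1 + ∑ j ∈ range k,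
      (a j * Real.cos ((2*(j:ℝ)+1)*s) + b j * Real.sin ((2*(j:ℝ)+1)*s)) with hfdef
  set T : ℂ[X] := Pg k (gam (fun j => (2*(j:ℝ)+1) * b j) (fun j => -((2*(j:ℝ)+1) * a j)))
    with hTdef
  have hTrep : ∀ s : ℝ, ((deriv f s : ℝ) : ℂ)
      = Complex.exp ((-(2*(k:ℝ)-1) * Complex.I) * s)
          * T.eval (Complex.exp ((2*Complex.I) * s)) := by
    intro s
    rw [(hasDerivAt_trig k a b s).deriv, hTdef]
    exact_mod_cast sumrep k hk (fun j => (2*(j:ℝ)+1) * b j) (fun j => -((2*(j:ℝ)+1) * a j)) s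
  have hfd : Differentiable ℝ f := (contDiff_trig k a b).differentiable (by simp)
  have hzero : ∀ i, f (t i) = 0 := by
    intro i
    have h0 := hcond i 0 (hμ1 i)
    rwa [iteratedDeriv_zero] at h0
  obtain ⟨ξ, hξinj, hξd, hξne, hξlo, hξhi⟩ := rolle_count hfd n' t htinj hzero
  have hξmem : ∀ j, ξ j ∈ Set.Ioo α (α + π) := by
    intro j
    obtain ⟨i₁, hl⟩ := hξlo j
    obtain ⟨i₂, hr⟩ := hξhi j
    exact ⟨lt_trans (ht i₁).1 hl, lt_trans hr (ht i₂).2⟩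
  have hDi : ∀ i, (X - C (Complex.exp ((2*Complex.I) * t i)))^(μ i - 1) ∣ T := by
    intro i
    refine (rootcond_iff (deriv f) T _ _ I2_ne_zero (t i) (μ i - 1) hTrep).mp ?_
    intro r hr
    rw [← iteratedDeriv_succ']
    exact hcond i (r+1) (by omega)
  have hEj : ∀ j, (X - C (Complex.exp ((2*Complex.I) * ξ j)))^1 ∣ T := by
    intro j
    refine (rootcond_iff (deriv f) T _ _ I2_ne_zero (ξ j) 1 hTrep).mp ?_
    intro r hr
    have hr0 : r = 0 := by omega
    subst hr0
    rw [iteratedDeriv_zero]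
    exact hξd j
  -- combine
  set z : (Fin (n'+1)) ⊕ (Fin n') → ℂ :=
    Sum.elim (fun i => Complex.exp ((2*Complex.I) * t i))
      (fun j => Complex.exp ((2*Complex.I) * ξ j)) with hzdef
  set e : (Fin (n'+1)) ⊕ (Fin n') → ℕ := Sum.elim (fun i => μ i - 1) (fun _ => 1) with hedef
  have hzinj : Function.Injective z := by
    intro p q hpq
    rcases p with i | j <;> rcases q with i' | j' <;>
      simp only [hzdef, Sum.elim_inl, Sum.elim_inr] at hpq
    · rw [htinj (exp_two_inj (ht i) (ht i') hpq)]
    · exact absurd (exp_two_inj (ht i) (hξmem j') hpq).symm (hξne j' i)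
    · exact absurd (exp_two_inj (hξmem j) (ht i') hpq) (hξne j i')
    · rw [hξinj (exp_two_inj (hξmem j) (hξmem j') hpq)]
  have hdvd : ∀ l, (X - C (z l))^(e l) ∣ T := by
    intro l
    rcases l with i | j
    · exact hDi i
    · exact hEj j
  have hprod := prod_pow_dvd z hzinj e T hdvd
  have hesum : ∑ l, e l = 2*k := by
    rw [Fintype.sum_sum_type]
    simp only [hedef, Sum.elim_inl, Sum.elim_inr]
    have h1 : ∑ i : Fin (n'+1), (μ i - 1) + (n'+1) = ∑ i : Fin (n'+1), μ i := by
      have hdist := Finset.sum_add_distrib (s := (Finset.univ : Finset (Fin (n'+1))))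
        (f := fun i => μ i - 1) (g := fun _ => (1:ℕ))
      simp only [Finset.sum_const, Finset.card_univ, Fintype.card_fin, smul_eq_mul,
        mul_one] at hdist
      rw [← hdist]
      exact Finset.sum_congr rfl fun i _ => by have := hμ1 i; omega
    have h2 : (∑ _j : Fin n', (1:ℕ)) = n' := by simp
    omega
  have hT0 : T ≠ 0 → False := by
    intro hne
    have hd1 := Polynomial.natDegree_le_of_dvd hprod hne
    rw [natDegree_prod_pow, hesum] at hd1
    have hd2 := natDegree_Pg_le k hk
      (gam (fun j => (2*(j:ℝ)+1) * b j) (fun j => -((2*(j:ℝ)+1) * a j)))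
    rw [← hTdef] at hd2
    omega
  have hTzero : T = 0 := by_contra fun h => hT0 h
  -- T = 0 forces all coefficients a b zero on range k
  have hab : ∀ j < k, a j = 0 ∧ b j = 0 := by
    intro j hj
    have hco := Pg_coeff_hi k
      (gam (fun j => (2*(j:ℝ)+1) * b j) (fun j => -((2*(j:ℝ)+1) * a j))) j hj
    rw [← hTdef, hTzero, coeff_zero] at hco
    have hre := congrArg Complex.re hco.symm
    have him := congrArg Complex.im hco.symm
    simp only [gam, Complex.zero_re, Complex.zero_im] at hre him
    have hpos : (2*(j:ℝ)+1) ≠ 0 := by positivity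
    constructor
    · have him' : - -((2*(j:ℝ)+1) * a j) / 2 = 0 := him
      have : (2*(j:ℝ)+1) * a j = 0 := by linarith
      rcases mul_eq_zero.mp this with h' | h'
      · exact absurd h' hpos
      · exact h'
    · have hre' : (2*(j:ℝ)+1) * b j / 2 = 0 := hre
      have : (2*(j:ℝ)+1) * b j = 0 := by linarith
      rcases mul_eq_zero.mp this with h' | h'
      · exact absurd h' hpos
      · exact h'
  have hf1 : f (t 0) = 1 := by
    rw [hfdef]
    simp only
    rw [Finset.sum_eq_zero, add_zero]
    intro j hj
    obtain ⟨ha0, hb0⟩ := hab j (mem_range.mp hj)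
    rw [ha0, hb0]
    ring
  rw [hzero 0] at hf1
  exact absurd hf1 (by norm_num)

lemma exist (k n : ℕ) (hk : 1 ≤ k) (α : ℝ) (t : Fin n → ℝ)
    (ht : ∀ i, t i ∈ Set.Ioo α (α + π)) (htinj : Function.Injective t)
    (m : Fin n → ℕ) (hm : ∀ i, 1 ≤ m i) (hsum : ∑ i, m i = 2*k) :
    ∃ a b : ℕ → ℝ, ∀ i,
      (∀ r < m i, iteratedDeriv r (fun s : ℝ => 1 + ∑ j ∈ range k,
        (a j * Real.cos ((2*(j:ℝ)+1)*s) + b j * Real.sin ((2*(j:ℝ)+1)*s))) (t i) = 0)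
      ∧ iteratedDeriv (m i) (fun s : ℝ => 1 + ∑ j ∈ range k,
        (a j * Real.cos ((2*(j:ℝ)+1)*s) + b j * Real.sin ((2*(j:ℝ)+1)*s))) (t i) ≠ 0 := by
  classical
  set w : Fin n → ℂ := fun i => Complex.exp (Complex.I * t i) with hw
  set v : Fin n → ℂ := fun i => Complex.exp ((2*Complex.I) * t i) with hv
  have hvinj : Function.Injective v := fun i j h => htinj (exp_two_inj (ht i) (ht j) h)
  choose σ hσ using fun i => exists_sqrt_poly (w i) (Complex.exp_ne_zero _) (m i)
  set N : Fin n → ℂ[X] := fun i => (X - C (v i))^(m i) with hN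
  set A : Fin n → ℂ[X] := fun i => -(X^(k-1) * σ i) with hA
  have hcop : ∀ i ∈ Finset.univ, ∀ j ∈ Finset.univ, i ≠ j → IsCoprime (N i) (N j) :=
    fun i _ j _ hij => (isCoprime_X_sub_C (fun hc => hij (hvinj hc))).pow
  obtain ⟨P₀, hP₀⟩ := crt Finset.univ N A hcop
  set M : ℂ[X] := ∏ i, N i with hM
  have hMmonic : M.Monic := monic_prod_of_monic _ _ (fun i _ => (monic_X_sub_C _).pow _)
  have hMdeg : M.natDegree = 2*k := by
    rw [hM, hN, natDegree_prod_pow v m, hsum]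
  set P : ℂ[X] := P₀ %ₘ M with hP
  have hPdeg : P.natDegree < 2*k := by
    rcases eq_or_ne P 0 with h0 | h0
    · rw [h0, natDegree_zero]; omega
    · have h1 := Polynomial.degree_modByMonic_lt P₀ hMmonic
      rw [← hP] at h1
      have h2 := Polynomial.natDegree_lt_natDegree h0 h1
      omega
  have hPmod : ∀ i, N i ∣ (P - A i) := by
    intro i
    have hMP : P = P₀ - M * (P₀ /ₘ M) := by
      rw [hP, eq_sub_iff_add_eq, Polynomial.modByMonic_add_div P₀ M]
    have h1 := hP₀ i (Finset.mem_univ i)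
    have h2 : N i ∣ M := Finset.dvd_prod_of_mem N (Finset.mem_univ i)
    rw [hMP, sub_right_comm]
    exact dvd_sub h1 (h2.mul_right _)
  set B : ℂ[X] := X^(2*k-1) + P.comp (X^2) with hB
  have hBdvd : ∀ i, (X - C (w i))^(m i) ∣ B := by
    intro i
    have h1 : (X - C (w i))^(m i) ∣ (P - A i).comp (X^2) := by
      obtain ⟨q, hq⟩ := hPmod i
      rw [hq, mul_comp]
      simp only [hN, pow_comp, sub_comp, X_comp, C_comp]
      have hv2 : C (v i) = (C (w i))^2 := by
        rw [← C_pow]; congr 1; rw [hv, hw]; exact (exp_sq (t i)).symm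
      rw [hv2, show ((X:ℂ[X])^2 - (C (w i))^2) = (X - C (w i)) * (X + C (w i)) from by ring,
        mul_pow]
      exact ⟨(X + C (w i))^(m i) * q.comp (X^2), by ring⟩
    have h2 : (X - C (w i))^(m i) ∣ X^(2*k-2) * ((σ i).comp (X^2) - X) := (hσ i).mul_left _
    have hBeq : B = (P - A i).comp (X^2) - X^(2*k-2) * ((σ i).comp (X^2) - X) := by
      rw [hB, hA]
      simp only [sub_comp, neg_comp, mul_comp, pow_comp, X_comp]
      have e1 : (((X:ℂ[X])^2))^(k-1) = X^(2*k-2) := by rw [← pow_mul]; congr 1; omega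
      have hXpow : (X:ℂ[X])^(2*k-2) * X = X^(2*k-1) := by rw [← pow_succ]; congr 1; omega
      rw [e1, ← hXpow]
      ring
    rw [hBeq]
    exact dvd_sub h1 h2
  set aa : ℕ → ℝ := fun j => (P.coeff (k+j) + (starRingEnd ℂ) (P.coeff (k-1-j))).re with haa
  set bb : ℕ → ℝ := fun j => -((P.coeff (k+j) + (starRingEnd ℂ) (P.coeff (k-1-j))).im) with hbb
  refine ⟨aa, bb, ?_⟩
  set f : ℝ → ℝ := fun s => 1 + ∑ j ∈ range k,
    (aa j * Real.cos ((2*(j:ℝ)+1)*s) + bb j * Real.sin ((2*(j:ℝ)+1)*s)) with hfdef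
  set F : ℝ → ℂ := fun s : ℝ => Complex.exp ((-(2*(k:ℝ)-1) * Complex.I) * s)
    * (B.eval (Complex.exp (Complex.I * s))) with hF
  have hFsm : ContDiff ℝ ∞ F := (contDiff_cexp_lin _).mul (contDiff_polyexp _ _)
  have hfre : ∀ s, f s = (F s).re := by
    intro s
    rw [hF]
    simp only
    rw [hB, rep_re k hk P hPdeg s]
  have hcond : ∀ i, ∀ r < m i, iteratedDeriv r f (t i) = 0 := by
    intro i r hr
    have hfF : f = fun s => Complex.reCLM (F s) := by
      funext s; rw [hfre s, Complex.reCLM_apply]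
    rw [hfF, clm_iteratedDeriv Complex.reCLM hFsm r (t i)]
    have hHv : ∀ r' < m i, iteratedDeriv r'
        (fun s : ℝ => B.eval (Complex.exp (Complex.I * s))) (t i) = 0 := by
      intro r' hr'
      rw [iteratedDeriv_polyexp, eval_Th_of_dvd _ _ (m i) (hBdvd i) r' hr', mul_zero]
    have hvt := vanish_transfer ((-(2*(k:ℝ)-1) * Complex.I)) (t i) (m i) _
      (contDiff_polyexp _ _) hHv r hr
    have hFv : iteratedDeriv r F (t i) = 0 := hvt
    rw [hFv, map_zero]
  refine fun i => ⟨hcond i, ?_⟩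
  intro hcontra
  refine no_extra k n hk α t ht htinj (fun i' => m i' + (if i' = i then 1 else 0))
    (fun i' => le_trans (hm i') (Nat.le_add_right _ _)) ?_ aa bb ?_
  · rw [Finset.sum_add_distrib, hsum]
    simp [Finset.sum_ite_eq']
  · intro i' r hr
    rcases eq_or_ne i' i with rfl | hne
    · have hr' : r < m i' + 1 := by simpa using hr
      rcases Nat.lt_succ_iff_lt_or_eq.mp hr' with h' | h'
      · exact hcond i' r h'
      · rw [h']; exact hcontra
    · have hr' : r < m i' := by simpa [hne] using hr
      exact hcond i' r hr'

end Raked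


end
end RakedDev

theorem raked_exists_unique (k n : ℕ) (hk : 1 ≤ k)
    (α : ℝ) (t : Fin n → ℝ) (ht : ∀ i, t i ∈ Set.Ioo α (α + Real.pi))
    (htinj : Function.Injective t)
    (m : Fin n → ℕ) (hm : ∀ i, 1 ≤ m i) (hsum : ∑ i, m i = 2 * k) :
    ∃! f : ℝ → ℝ,
      (∃ a b : ℕ → ℝ, ∀ s : ℝ, f s = 1 + ∑ j ∈ Finset.range k,
          (a j * Real.cos ((2 * (j : ℝ) + 1) * s) +
            b j * Real.sin ((2 * (j : ℝ) + 1) * s))) ∧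
      ∀ i, (∀ r < m i, iteratedDeriv r f (t i) = 0) ∧
        iteratedDeriv (m i) f (t i) ≠ 0 := by
  obtain ⟨a, b, hprop⟩ := Raked.exist k n hk α t ht htinj m hm hsum
  refine ⟨fun s : ℝ => 1 + ∑ j ∈ Finset.range k,
      (a j * Real.cos ((2 * (j : ℝ) + 1) * s) + b j * Real.sin ((2 * (j : ℝ) + 1) * s)),
    ⟨⟨a, b, fun s => rfl⟩, hprop⟩, ?_⟩
  rintro g ⟨⟨a₂, b₂, hgrep⟩, hgcond⟩
  exact Raked.uniq k n hk α t ht htinj m hsum a₂ b₂ a b g _ hgrep (fun s => rfl)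
    (fun i => (hgcond i).1) (fun i => (hprop i).1)
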